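/- Let W = {W₁,…,W_K} and W' = {W'₁,…,W'_K} be two clusterings of the same n vertices indexed so that W'_i corresponds to W_i (an injection from clusters of W' to clusters of W). Then cost(W') − cost(W) ≤ n · Σᵢ |W'ᵢ \ Wᵢ|. -/

import Mathlib

/-- Edge pairs of the complete graph on `Fin n`. -/
def edgePairs (n : ℕ) : Finset (Fin n × Fin n) :=
  Finset.univ.filter (fun p => p.1 < p.2)

/-- Cost (number of disagreements) of a clustering given as an indexed family of
clusters: negative edges inside clusters plus positive edges between clusters. -/
def famCost {n : ℕ} {ι : Type*} [Fintype ι] [DecidableEq ι]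
    (pos : Fin n → Fin n → Bool) (W : ι → Finset (Fin n)) : ℕ :=
  ((edgePairs n).filter
    (fun p => ¬ ((∃ i, p.1 ∈ W i ∧ p.2 ∈ W i) ↔ pos p.1 p.2 = true))).card

/-- if `W` and `W'` are two clusterings of the same `n` vertices,
indexed so that `W' i` corresponds to `W i`, then
`cost(W') − cost(W) ≤ n · Σᵢ |W'ᵢ \ Wᵢ|`. -/
theorem cost_diff_le_n_mul_sum {n : ℕ} {ι : Type*} [Fintype ι] [DecidableEq ι]
    (pos : Fin n → Fin n → Bool) (_hsym : ∀ u v, pos u v = pos v u)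
    (W W' : ι → Finset (Fin n))
    (hW : ∀ v : Fin n, ∃! i, v ∈ W i)
    (hW' : ∀ v : Fin n, ∃! i, v ∈ W' i) :
    (famCost pos W' : ℤ) - famCost pos W ≤ n * ∑ i, ((W' i \ W i).card : ℤ) := by
  classical
  set D : Finset (Fin n) := Finset.univ.biUnion (fun i => W' i \ W i) with hDdef
  have memD : ∀ v : Fin n, v ∈ D ↔ ∃ i, v ∈ W' i ∧ v ∉ W i := by
    intro v
    simp [hDdef, Finset.mem_biUnion, Finset.mem_sdiff]
  -- key: outside D, same-cluster predicates agree
  have key : ∀ u v : Fin n, u ∉ D → v ∉ D →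
      ((∃ i, u ∈ W' i ∧ v ∈ W' i) ↔ (∃ i, u ∈ W i ∧ v ∈ W i)) := by
    intro u v hu hv
    rw [memD] at hu hv
    push_neg at hu hv
    constructor
    · rintro ⟨i, hui, hvi⟩
      exact ⟨i, hu i hui, hv i hvi⟩
    · rintro ⟨j, huj, hvj⟩
      obtain ⟨i, hui⟩ := (hW' u).exists
      obtain ⟨i', hvi'⟩ := (hW' v).exists
      have h1 : u ∈ W i := hu i hui
      have h2 : v ∈ W i' := hv i' hvi'
      have e1 : i = j := (hW u).unique h1 huj
      have e2 : i' = j := (hW v).unique h2 hvj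
      exact ⟨j, e1 ▸ hui, e2 ▸ hvi'⟩
  set S := ((edgePairs n).filter
    (fun p => ¬ ((∃ i, p.1 ∈ W' i ∧ p.2 ∈ W' i) ↔ pos p.1 p.2 = true))) with hS
  set T := ((edgePairs n).filter
    (fun p => ¬ ((∃ i, p.1 ∈ W i ∧ p.2 ∈ W i) ↔ pos p.1 p.2 = true))) with hT
  have hcost' : famCost pos W' = S.card := by simp [famCost, hS]
  have hcost : famCost pos W = T.card := by simp [famCost, hT]
  set B := (edgePairs n).filter (fun p => p.1 ∈ D ∨ p.2 ∈ D) with hB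
  have hsub : S \ T ⊆ B := by
    intro p hp
    rw [Finset.mem_sdiff] at hp
    obtain ⟨hpS, hpT⟩ := hp
    rw [hS, Finset.mem_filter] at hpS
    rw [hB, Finset.mem_filter]
    refine ⟨hpS.1, ?_⟩
    by_contra hc
    push_neg at hc
    apply hpS.2
    rw [key p.1 p.2 hc.1 hc.2]
    by_contra hne
    exact hpT (by rw [hT, Finset.mem_filter]; exact ⟨hpS.1, hne⟩)
  have hBcard : B.card ≤ D.card * n := by
    have h := Finset.card_le_card_of_injOn
      (f := fun p : Fin n × Fin n => if p.1 ∈ D then p else (p.2, p.1))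
      (s := B) (t := D ×ˢ Finset.univ) ?_ ?_
    · simpa [Finset.card_product] using h
    · intro p hp
      rw [hB, Finset.mem_coe, Finset.mem_filter] at hp
      by_cases h1 : p.1 ∈ D
      · simp [h1]
      · have h2 : p.2 ∈ D := hp.2.resolve_left h1
        simp [h1, h2]
    · intro p hp q hq hfq
      simp only [Finset.mem_coe, hB, Finset.mem_filter, edgePairs, Finset.mem_univ,
        true_and] at hp hq
      have hplt := hp.1
      have hqlt := hq.1
      simp only at hfq
      split_ifs at hfq with h1 h2 h2
      · exact hfq
      · have e1 : p.1 = q.2 := congrArg Prod.fst hfq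
        have e2 : p.2 = q.1 := congrArg Prod.snd hfq
        exact absurd hqlt (not_lt.2 (le_of_lt (e1 ▸ e2 ▸ hplt)))
      · have e1 : p.2 = q.1 := congrArg Prod.fst hfq
        have e2 : p.1 = q.2 := congrArg Prod.snd hfq
        exact absurd hqlt (not_lt.2 (le_of_lt (e2 ▸ e1 ▸ hplt)))
      · have e1 : p.2 = q.2 := congrArg Prod.fst hfq
        have e2 : p.1 = q.1 := congrArg Prod.snd hfq
        exact Prod.ext e2 e1
  have hDle : D.card ≤ ∑ i, (W' i \ W i).card := Finset.card_biUnion_le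
  have hnat : famCost pos W' ≤ famCost pos W + n * ∑ i, (W' i \ W i).card := by
    rw [hcost', hcost]
    calc S.card ≤ (S \ T).card + T.card := Finset.card_le_card_sdiff_add_card
    _ ≤ B.card + T.card := Nat.add_le_add_right (Finset.card_le_card hsub) _
    _ ≤ D.card * n + T.card := by gcongr
    _ ≤ (∑ i, (W' i \ W i).card) * n + T.card := by gcongr
    _ = T.card + n * ∑ i, (W' i \ W i).card := by ring
  have h2 : (famCost pos W' : ℤ) ≤ famCost pos W + n * ∑ i, ((W' i \ W i).card : ℤ) := by
    exact_mod_cast hnat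
  linarith
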